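/- Let D be a double Boolean algebra and K^T_pr(D) := ((F_pr(D),T),(I_pr(D),J),∇), where F ∇ I iff F ∩ I = ∅. Then K^T_pr(D) is a CTSCR: for every open set O of (I_pr(D),J), the sets O^◇ and O^□ are open in (F_pr(D),T), and for every open set O of (F_pr(D),T), the sets O^◆ and O^■ are open in (I_pr(D),J). -/

import Mathlib

universe u v

/-- A double Boolean algebra (dBa). -/
structure DBA (D : Type u) where
  sup : D → D → D
  inf : D → D → D
  neg : D → D
  dneg : D → D
  top : D
  bot : D
  ax1a : ∀ x y, inf (inf x x) y = inf x y
  ax2a : ∀ x y, inf x y = inf y x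
  ax3a : ∀ x y z, inf x (inf y z) = inf (inf x y) z
  ax4a : ∀ x, neg (inf x x) = neg x
  ax5a : ∀ x y, inf x (sup x y) = inf x x
  ax6a : ∀ x y z, inf x (neg (inf (neg y) (neg z))) =
      neg (inf (neg (inf x y)) (neg (inf x z)))
  ax7a : ∀ x y, inf x (neg (inf (neg x) (neg y))) = inf x x
  ax8a : ∀ x y, neg (neg (inf x y)) = inf x y
  ax9a : ∀ x, inf x (neg x) = bot
  ax10a : neg bot = inf top top
  ax11a : neg top = bot
  ax1b : ∀ x y, sup (sup x x) y = sup x y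
  ax2b : ∀ x y, sup x y = sup y x
  ax3b : ∀ x y z, sup x (sup y z) = sup (sup x y) z
  ax4b : ∀ x, dneg (sup x x) = dneg x
  ax5b : ∀ x y, sup x (inf x y) = sup x x
  ax6b : ∀ x y z, sup x (dneg (sup (dneg y) (dneg z))) =
      dneg (sup (dneg (sup x y)) (dneg (sup x z)))
  ax7b : ∀ x y, sup x (dneg (sup (dneg x) (dneg y))) = sup x x
  ax8b : ∀ x y, dneg (dneg (sup x y)) = sup x y
  ax9b : ∀ x, sup x (dneg x) = top
  ax10b : dneg top = sup bot bot
  ax11b : dneg bot = top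
  ax12 : ∀ x, sup (inf x x) (inf x x) = inf (sup x x) (sup x x)

namespace DBA

variable {D : Type u} {E : Type v}

/-- x ∨ y := ¬(¬x ⊓ ¬y) -/
def vee (A : DBA D) (x y : D) : D := A.neg (A.inf (A.neg x) (A.neg y))

/-- x ∧ y := ⌟(⌟x ⊔ ⌟y) -/
def wedge (A : DBA D) (x y : D) : D := A.dneg (A.sup (A.dneg x) (A.dneg y))

/-- The quasi-order ⊑. -/
def le (A : DBA D) (x y : D) : Prop := A.inf x y = A.inf x x ∧ A.sup x y = A.sup y y

def IsFilter (A : DBA D) (F : Set D) : Prop :=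
  (∀ x ∈ F, ∀ y ∈ F, A.inf x y ∈ F) ∧ ∀ x ∈ F, ∀ z, A.le x z → z ∈ F

def IsIdeal (A : DBA D) (I : Set D) : Prop :=
  (∀ x ∈ I, ∀ y ∈ I, A.sup x y ∈ I) ∧ ∀ x ∈ I, ∀ z, A.le z x → z ∈ I

def IsPrimaryFilter (A : DBA D) (F : Set D) : Prop :=
  A.IsFilter F ∧ F ≠ Set.univ ∧ ∀ x, x ∈ F ∨ A.neg x ∈ F

def IsPrimaryIdeal (A : DBA D) (I : Set D) : Prop :=
  A.IsIdeal I ∧ I ≠ Set.univ ∧ ∀ x, x ∈ I ∨ A.dneg x ∈ I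

def Pure (A : DBA D) : Prop := ∀ x, A.inf x x = x ∨ A.sup x x = x

def Contextual (A : DBA D) : Prop := ∀ x y, A.le x y → A.le y x → x = y

def FullyContextual (A : DBA D) : Prop :=
  A.Contextual ∧
    ∀ y x, A.inf y y = y → A.sup x x = x → A.sup y y = A.inf x x →
      ∃! z, A.inf z z = y ∧ A.sup z z = x

/-- D_p = D_⊓ ∪ D_⊔ -/
def Dp (A : DBA D) : Set D := {x | A.inf x x = x} ∪ {x | A.sup x x = x}

def IsHom (A : DBA D) (B : DBA E) (h : D → E) : Prop :=
  (∀ x y, h (A.inf x y) = B.inf (h x) (h y)) ∧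
  (∀ x y, h (A.sup x y) = B.sup (h x) (h y)) ∧
  (∀ x, h (A.neg x) = B.neg (h x)) ∧
  (∀ x, h (A.dneg x) = B.dneg (h x)) ∧
  h A.top = B.top ∧ h A.bot = B.bot

def IsHomOn (A : DBA D) (B : DBA E) (S : Set D) (h : D → E) : Prop :=
  (∀ x ∈ S, ∀ y ∈ S, h (A.inf x y) = B.inf (h x) (h y)) ∧
  (∀ x ∈ S, ∀ y ∈ S, h (A.sup x y) = B.sup (h x) (h y)) ∧
  (∀ x ∈ S, h (A.neg x) = B.neg (h x)) ∧
  (∀ x ∈ S, h (A.dneg x) = B.dneg (h x)) ∧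
  h A.top = B.top ∧ h A.bot = B.bot

end DBA

section FCA

variable {G : Type u} {M : Type v}

/-- B^◇ -/
def odia (R : G → M → Prop) (B : Set M) : Set G := {g | ∃ m ∈ B, R g m}
/-- B^□ -/
def obox (R : G → M → Prop) (B : Set M) : Set G := {g | ∀ m, R g m → m ∈ B}
/-- A^◆ -/
def obdia (R : G → M → Prop) (A : Set G) : Set M := {m | ∃ g ∈ A, R g m}
/-- A^■ -/
def obbox (R : G → M → Prop) (A : Set G) : Set M := {m | ∀ g, R g m → g ∈ A}

def pinf (R : G → M → Prop) (p q : Set G × Set M) : Set G × Set M :=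
  (p.1 ∪ q.1, obbox R (p.1 ∪ q.1))
def psup (R : G → M → Prop) (p q : Set G × Set M) : Set G × Set M :=
  (odia R (p.2 ∩ q.2), p.2 ∩ q.2)
def pneg (R : G → M → Prop) (p : Set G × Set M) : Set G × Set M :=
  (p.1ᶜ, obbox R p.1ᶜ)
def pdneg (R : G → M → Prop) (p : Set G × Set M) : Set G × Set M :=
  (odia R p.2ᶜ, p.2ᶜ)
def ptop : Set G × Set M := (∅, ∅)
def pbot : Set G × Set M := (Set.univ, Set.univ)
/-- quasi-order on pairs: (A,B) ⊑ (C,D) iff C ⊆ A and D ⊆ B -/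
def ple (p q : Set G × Set M) : Prop := q.1 ⊆ p.1 ∧ q.2 ⊆ p.2

/-- object oriented protoconcept -/
def IsProto (R : G → M → Prop) (p : Set G × Set M) : Prop :=
  odia R (obbox R p.1) = odia R p.2
/-- object oriented semiconcept -/
def IsSemi (R : G → M → Prop) (p : Set G × Set M) : Prop :=
  obbox R p.1 = p.2 ∨ odia R p.2 = p.1

/-- continuity of the relation R -/
def ContRel [TopologicalSpace G] [TopologicalSpace M] (R : G → M → Prop) : Prop :=
  ∀ O : Set M, IsOpen O → IsOpen (odia R O) ∧ IsOpen (obox R O)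
/-- continuity of the converse relation R⁻¹ -/
def ContRelInv [TopologicalSpace G] [TopologicalSpace M] (R : G → M → Prop) : Prop :=
  ∀ O : Set G, IsOpen O → IsOpen (obdia R O) ∧ IsOpen (obbox R O)

def IsClopenProto [TopologicalSpace G] [TopologicalSpace M] (R : G → M → Prop)
    (p : Set G × Set M) : Prop :=
  IsProto R p ∧ IsClopen p.1 ∧ IsClopen p.2

def IsClopenSemi [TopologicalSpace G] [TopologicalSpace M] (R : G → M → Prop)
    (p : Set G × Set M) : Prop :=
  IsSemi R p ∧ IsClopen p.1 ∧ IsClopen p.2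

def pmap {G' : Type*} {M' : Type*} (α : G → G') (β : M → M') (p : Set G' × Set M') :
    Set G × Set M := (α ⁻¹' p.1, β ⁻¹' p.2)

end FCA

section StoneDBA

variable {D : Type u}

/-- the set of primary filters of a dBa, as a type -/
def PrimF (A : DBA D) : Type u := {F : Set D // A.IsPrimaryFilter F}
/-- the set of primary ideals of a dBa, as a type -/
def PrimI (A : DBA D) : Type u := {I : Set D // A.IsPrimaryIdeal I}
/-- F ∇ I iff F ∩ I = ∅ -/
def nabla (A : DBA D) : PrimF A → PrimI A → Prop := fun F I => F.val ∩ I.val = ∅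
/-- F_x -/
def Fset (A : DBA D) (x : D) : Set (PrimF A) := {F | x ∈ F.val}
/-- I_x -/
def Iset (A : DBA D) (x : D) : Set (PrimI A) := {I | x ∈ I.val}

/-- the topology T on primary filters, with the F_x as a subbase of closed sets -/
def filtTop (A : DBA D) : TopologicalSpace (PrimF A) :=
  TopologicalSpace.generateFrom {U | ∃ x : D, U = (Fset A x)ᶜ}
/-- the topology J on primary ideals, with the I_x as a subbase of closed sets -/
def idlTop (A : DBA D) : TopologicalSpace (PrimI A) :=
  TopologicalSpace.generateFrom {U | ∃ x : D, U = (Iset A x)ᶜ}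

/-- the map h(x) := (F_{¬x}, I_x) -/
def protoEmb (A : DBA D) (x : D) : Set (PrimF A) × Set (PrimI A) :=
  (Fset A (A.neg x), Iset A x)

end StoneDBA

section SemiPrim

variable {G : Type u} {M : Type v} [TopologicalSpace G] [TopologicalSpace M]

/-- a primary filter of the dBa of clopen object oriented semiconcepts -/
def IsSemiPrimFilter (R : G → M → Prop) (F : Set (Set G × Set M)) : Prop :=
  (∀ p ∈ F, IsClopenSemi R p) ∧
  (∀ p ∈ F, ∀ q ∈ F, pinf R p q ∈ F) ∧
  (∀ p ∈ F, ∀ z, IsClopenSemi R z → ple p z → z ∈ F) ∧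
  F ≠ {p | IsClopenSemi R p} ∧
  (∀ p, IsClopenSemi R p → (p ∈ F ∨ pneg R p ∈ F))

/-- a primary ideal of the dBa of clopen object oriented semiconcepts -/
def IsSemiPrimIdeal (R : G → M → Prop) (I : Set (Set G × Set M)) : Prop :=
  (∀ p ∈ I, IsClopenSemi R p) ∧
  (∀ p ∈ I, ∀ q ∈ I, psup R p q ∈ I) ∧
  (∀ p ∈ I, ∀ z, IsClopenSemi R z → ple z p → z ∈ I) ∧
  I ≠ {p | IsClopenSemi R p} ∧
  (∀ p, IsClopenSemi R p → (p ∈ I ∨ pdneg R p ∈ I))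

def SemiPF (R : G → M → Prop) := {F : Set (Set G × Set M) // IsSemiPrimFilter R F}
def SemiPI (R : G → M → Prop) := {I : Set (Set G × Set M) // IsSemiPrimIdeal R I}

def semiPFTop (R : G → M → Prop) : TopologicalSpace (SemiPF R) :=
  TopologicalSpace.generateFrom
    {U | ∃ p, IsClopenSemi R p ∧ U = {F : SemiPF R | p ∈ F.val}ᶜ}
def semiPITop (R : G → M → Prop) : TopologicalSpace (SemiPI R) :=
  TopologicalSpace.generateFrom
    {U | ∃ p, IsClopenSemi R p ∧ U = {I : SemiPI R | p ∈ I.val}ᶜ}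

end SemiPrim


namespace DBA

variable {D : Type u} (A : DBA D)

/-! ### Basic equational lemmas -/

lemma inf_idem_r (x y : D) : A.inf x (A.inf y y) = A.inf x y := by
  rw [A.ax2a x (A.inf y y), A.ax1a, A.ax2a]

lemma sup_idem_r (x y : D) : A.sup x (A.sup y y) = A.sup x y := by
  rw [A.ax2b x (A.sup y y), A.ax1b, A.ax2b]

lemma inf_inf_self (x y : D) : A.inf (A.inf x y) (A.inf x y) = A.inf x y := by
  calc A.inf (A.inf x y) (A.inf x y) = A.inf (A.inf (A.inf x y) x) y := A.ax3a ..
    _ = A.inf (A.inf x (A.inf y x)) y := by rw [← A.ax3a x y x]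
    _ = A.inf (A.inf x (A.inf x y)) y := by rw [A.ax2a y x]
    _ = A.inf (A.inf (A.inf x x) y) y := by rw [A.ax3a x x y]
    _ = A.inf (A.inf x y) y := by rw [A.ax1a]
    _ = A.inf x (A.inf y y) := (A.ax3a ..).symm
    _ = A.inf x y := A.inf_idem_r ..

lemma sup_sup_self (x y : D) : A.sup (A.sup x y) (A.sup x y) = A.sup x y := by
  calc A.sup (A.sup x y) (A.sup x y) = A.sup (A.sup (A.sup x y) x) y := A.ax3b ..
    _ = A.sup (A.sup x (A.sup y x)) y := by rw [← A.ax3b x y x]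
    _ = A.sup (A.sup x (A.sup x y)) y := by rw [A.ax2b y x]
    _ = A.sup (A.sup (A.sup x x) y) y := by rw [A.ax3b x x y]
    _ = A.sup (A.sup x y) y := by rw [A.ax1b]
    _ = A.sup x (A.sup y y) := (A.ax3b ..).symm
    _ = A.sup x y := A.sup_idem_r ..

lemma neg_neg (x : D) : A.neg (A.neg x) = A.inf x x := by
  rw [← A.ax4a x, A.ax8a]

lemma dneg_dneg (x : D) : A.dneg (A.dneg x) = A.sup x x := by
  rw [← A.ax4b x, A.ax8b]

lemma neg_idem (x : D) : A.inf (A.neg x) (A.neg x) = A.neg x := by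
  calc A.inf (A.neg x) (A.neg x) = A.neg (A.neg (A.neg x)) := (A.neg_neg _).symm
    _ = A.neg (A.inf x x) := congrArg A.neg (A.neg_neg x)
    _ = A.neg x := A.ax4a x

lemma dneg_idem (x : D) : A.sup (A.dneg x) (A.dneg x) = A.dneg x := by
  calc A.sup (A.dneg x) (A.dneg x) = A.dneg (A.dneg (A.dneg x)) := (A.dneg_dneg _).symm
    _ = A.dneg (A.sup x x) := congrArg A.dneg (A.dneg_dneg x)
    _ = A.dneg x := A.ax4b x

lemma inf_bot (x : D) : A.inf x A.bot = A.bot := by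
  conv_lhs => rw [← A.ax9a x]
  rw [A.ax3a, A.ax1a, A.ax9a]

lemma bot_inf (x : D) : A.inf A.bot x = A.bot := by rw [A.ax2a, A.inf_bot]

lemma sup_top (x : D) : A.sup x A.top = A.top := by
  conv_lhs => rw [← A.ax9b x]
  rw [A.ax3b, A.ax1b, A.ax9b]

lemma top_sup (x : D) : A.sup A.top x = A.top := by rw [A.ax2b, A.sup_top]

lemma sup_bot (x : D) : A.sup x A.bot = A.sup x x := by rw [← A.ax9a x, A.ax5b]

lemma bot_sup (x : D) : A.sup A.bot x = A.sup x x := by rw [A.ax2b, A.sup_bot]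

lemma inf_top (x : D) : A.inf x A.top = A.inf x x := by rw [← A.ax9b x, A.ax5a]

lemma top_inf (x : D) : A.inf A.top x = A.inf x x := by rw [A.ax2a, A.inf_top]

/-! ### The quasi-order -/

lemma le_refl (x : D) : A.le x x := ⟨rfl, rfl⟩

lemma le_trans {x y z : D} (h1 : A.le x y) (h2 : A.le y z) : A.le x z := by
  obtain ⟨h1i, h1s⟩ := h1
  obtain ⟨h2i, h2s⟩ := h2
  constructor
  · calc A.inf x z = A.inf (A.inf x x) z := by rw [A.ax1a]
      _ = A.inf (A.inf x y) z := by rw [h1i]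
      _ = A.inf x (A.inf y z) := (A.ax3a ..).symm
      _ = A.inf x (A.inf y y) := by rw [h2i]
      _ = A.inf x y := A.inf_idem_r ..
      _ = A.inf x x := h1i
  · calc A.sup x z = A.sup x (A.sup z z) := (A.sup_idem_r ..).symm
      _ = A.sup x (A.sup y z) := by rw [h2s]
      _ = A.sup (A.sup x y) z := A.ax3b ..
      _ = A.sup (A.sup y y) z := by rw [h1s]
      _ = A.sup y z := A.ax1b ..
      _ = A.sup z z := h2s

lemma bot_le (x : D) : A.le A.bot x :=
  ⟨by rw [A.bot_inf, A.inf_bot], by rw [A.bot_sup]⟩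

lemma le_top (x : D) : A.le x A.top :=
  ⟨A.inf_top x, by rw [A.sup_top, A.sup_top]⟩

lemma inf_le_left (x y : D) : A.le (A.inf x y) x := by
  constructor
  · calc A.inf (A.inf x y) x = A.inf x (A.inf y x) := (A.ax3a ..).symm
      _ = A.inf x (A.inf x y) := by rw [A.ax2a y x]
      _ = A.inf (A.inf x x) y := A.ax3a ..
      _ = A.inf x y := by rw [A.ax1a]
      _ = A.inf (A.inf x y) (A.inf x y) := (A.inf_inf_self ..).symm
  · rw [A.ax2b, A.ax5b]

lemma inf_le_right (x y : D) : A.le (A.inf x y) y := by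
  have h := A.inf_le_left y x
  rwa [A.ax2a y x] at h

lemma le_sup_left (x y : D) : A.le x (A.sup x y) := by
  refine ⟨A.ax5a x y, ?_⟩
  rw [A.ax3b, A.ax1b, A.sup_sup_self]

lemma le_sup_right (x y : D) : A.le y (A.sup x y) := by
  have h := A.le_sup_left y x
  rwa [A.ax2b y x] at h

lemma le_psi (x : D) : A.le x (A.sup x x) := A.le_sup_left x x

lemma phi_le (x : D) : A.le (A.inf x x) x := A.inf_le_left x x

lemma sup_mono_left {x y : D} (h : A.sup x y = A.sup y y) (z : D) :
    A.le (A.sup x z) (A.sup y z) := by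
  have key : A.sup (A.sup x z) y = A.sup y z := by
    calc A.sup (A.sup x z) y = A.sup x (A.sup z y) := (A.ax3b ..).symm
      _ = A.sup x (A.sup y z) := by rw [A.ax2b z y]
      _ = A.sup (A.sup x y) z := A.ax3b ..
      _ = A.sup (A.sup y y) z := by rw [h]
      _ = A.sup y z := A.ax1b ..
  constructor
  · calc A.inf (A.sup x z) (A.sup y z)
        = A.inf (A.sup x z) (A.sup (A.sup x z) y) := by rw [key]
      _ = A.inf (A.sup x z) (A.sup x z) := A.ax5a ..
  · calc A.sup (A.sup x z) (A.sup y z) = A.sup (A.sup (A.sup x z) y) z := A.ax3b ..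
      _ = A.sup (A.sup y z) z := by rw [key]
      _ = A.sup y (A.sup z z) := (A.ax3b ..).symm
      _ = A.sup y z := A.sup_idem_r ..
      _ = A.sup (A.sup y z) (A.sup y z) := (A.sup_sup_self ..).symm

lemma sup_mono_right {x y : D} (h : A.sup x y = A.sup y y) (z : D) :
    A.le (A.sup z x) (A.sup z y) := by
  have h1 := A.sup_mono_left h z
  rwa [A.ax2b x z, A.ax2b y z] at h1

lemma le_of_sup_idem {x b : D} (hb : A.sup b b = b) (h : A.sup x b = b) : A.le x b := by
  constructor
  · conv_lhs => rw [← h]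
    exact A.ax5a ..
  · rw [h, hb]

lemma le_of_inf_idem {a b : D} (ha : A.inf a a = a) (h : A.inf a b = a) : A.le a b := by
  constructor
  · rw [h, ha]
  · conv_lhs => rw [← h]
    rw [A.ax2b, A.ax2a, A.ax5b]

end DBA

namespace DBA

variable {D : Type u} (A : DBA D)

/-! ### Filter and ideal lemmas -/

lemma inter_empty_not_mem {F I : Set D} (hd : F ∩ I = ∅) {x : D} (h1 : x ∈ F)
    (h2 : x ∈ I) : False := by
  rw [Set.eq_empty_iff_forall_notMem] at hd
  exact hd x ⟨h1, h2⟩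

lemma filter_bot_not_mem {F : Set D} (hF : A.IsPrimaryFilter F) : A.bot ∉ F := by
  intro hb
  exact hF.2.1 (Set.eq_univ_of_forall fun z => hF.1.2 A.bot hb z (A.bot_le z))

lemma filter_top_mem {F : Set D} (hF : A.IsPrimaryFilter F) : A.top ∈ F := by
  rcases hF.2.2 A.top with h | h
  · exact h
  · rw [A.ax11a] at h
    exact absurd h (A.filter_bot_not_mem hF)

lemma filter_neg_mem_iff {F : Set D} (hF : A.IsPrimaryFilter F) (x : D) :
    A.neg x ∈ F ↔ x ∉ F := by
  constructor
  · intro h1 h2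
    have hb : A.bot ∈ F := by rw [← A.ax9a x]; exact hF.1.1 x h2 (A.neg x) h1
    exact A.filter_bot_not_mem hF hb
  · intro h
    rcases hF.2.2 x with h' | h'
    · exact absurd h' h
    · exact h'

lemma ideal_top_not_mem {I : Set D} (hI : A.IsPrimaryIdeal I) : A.top ∉ I := by
  intro ht
  exact hI.2.1 (Set.eq_univ_of_forall fun z => hI.1.2 A.top ht z (A.le_top z))

lemma ideal_bot_mem {I : Set D} (hI : A.IsPrimaryIdeal I) : A.bot ∈ I := by
  rcases hI.2.2 A.bot with h | h
  · exact h
  · rw [A.ax11b] at h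
    exact absurd h (A.ideal_top_not_mem hI)

lemma ideal_dneg_mem_iff {I : Set D} (hI : A.IsPrimaryIdeal I) (x : D) :
    A.dneg x ∈ I ↔ x ∉ I := by
  constructor
  · intro h1 h2
    have ht : A.top ∈ I := by rw [← A.ax9b x]; exact hI.1.1 x h2 (A.dneg x) h1
    exact A.ideal_top_not_mem hI ht
  · intro h
    rcases hI.2.2 x with h' | h'
    · exact absurd h' h
    · exact h'

/-! ### The order-dual dBa -/

def op : DBA D where
  sup := A.inf
  inf := A.sup
  neg := A.dneg
  dneg := A.neg
  top := A.bot
  bot := A.top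
  ax1a := A.ax1b
  ax2a := A.ax2b
  ax3a := A.ax3b
  ax4a := A.ax4b
  ax5a := A.ax5b
  ax6a := A.ax6b
  ax7a := A.ax7b
  ax8a := A.ax8b
  ax9a := A.ax9b
  ax10a := A.ax10b
  ax11a := A.ax11b
  ax1b := A.ax1a
  ax2b := A.ax2a
  ax3b := A.ax3a
  ax4b := A.ax4a
  ax5b := A.ax5a
  ax6b := A.ax6a
  ax7b := A.ax7a
  ax8b := A.ax8a
  ax9b := A.ax9a
  ax10b := A.ax10a
  ax11b := A.ax11a
  ax12 := fun x => (A.ax12 x).symm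

lemma op_le {x y : D} : A.op.le x y ↔ A.le y x := by
  constructor
  · rintro ⟨h1, h2⟩
    exact ⟨by rw [A.ax2a y x]; exact h2, by rw [A.ax2b y x]; exact h1⟩
  · rintro ⟨h1, h2⟩
    constructor
    · show A.sup x y = A.sup x x
      rw [A.ax2b x y]; exact h2
    · show A.inf x y = A.inf y y
      rw [A.ax2a x y]; exact h1

lemma op_isFilter {S : Set D} : A.op.IsFilter S ↔ A.IsIdeal S := by
  constructor
  · rintro ⟨h1, h2⟩
    exact ⟨h1, fun x hx z hz => h2 x hx z (A.op_le.mpr hz)⟩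
  · rintro ⟨h1, h2⟩
    exact ⟨h1, fun x hx z hz => h2 x hx z (A.op_le.mp hz)⟩

lemma op_isIdeal {S : Set D} : A.op.IsIdeal S ↔ A.IsFilter S := by
  constructor
  · rintro ⟨h1, h2⟩
    exact ⟨h1, fun x hx z hz => h2 x hx z (A.op_le.mpr hz)⟩
  · rintro ⟨h1, h2⟩
    exact ⟨h1, fun x hx z hz => h2 x hx z (A.op_le.mp hz)⟩

lemma op_isPrimaryFilter {S : Set D} : A.op.IsPrimaryFilter S ↔ A.IsPrimaryIdeal S :=
  and_congr A.op_isFilter Iff.rfl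

lemma op_isPrimaryIdeal {S : Set D} : A.op.IsPrimaryIdeal S ↔ A.IsPrimaryFilter S :=
  and_congr A.op_isIdeal Iff.rfl

/-! ### The Boolean algebra of ⊔-idempotents -/

def Dsup (A : DBA D) := {a : D // A.sup a a = a}

lemma wedge_def (x y : D) : A.wedge x y = A.dneg (A.sup (A.dneg x) (A.dneg y)) := rfl

lemma wedge_comm (x y : D) : A.wedge x y = A.wedge y x := by
  unfold wedge; rw [A.ax2b]

lemma wedge_idem (x y : D) : A.sup (A.wedge x y) (A.wedge x y) = A.wedge x y :=
  A.dneg_idem _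

instance : PartialOrder A.Dsup where
  le a b := A.sup a.1 b.1 = b.1
  le_refl a := a.2
  le_trans a b c h1 h2 := by
    show A.sup a.1 c.1 = c.1
    calc A.sup a.1 c.1 = A.sup a.1 (A.sup b.1 c.1) := by rw [h2]
      _ = A.sup (A.sup a.1 b.1) c.1 := A.ax3b ..
      _ = A.sup b.1 c.1 := by rw [h1]
      _ = c.1 := h2
  le_antisymm a b h1 h2 := by
    refine Subtype.ext ?_
    calc a.1 = A.sup b.1 a.1 := h2.symm
      _ = A.sup a.1 b.1 := A.ax2b ..
      _ = b.1 := h1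

lemma dsup_le_def {a b : A.Dsup} : a ≤ b ↔ A.sup a.1 b.1 = b.1 := Iff.rfl

instance : Lattice A.Dsup where
  sup a b := ⟨A.sup a.1 b.1, A.sup_sup_self ..⟩
  le_sup_left a b := show A.sup a.1 (A.sup a.1 b.1) = A.sup a.1 b.1 by
    rw [A.ax3b, A.ax1b]
  le_sup_right a b := show A.sup b.1 (A.sup a.1 b.1) = A.sup a.1 b.1 by
    rw [A.ax2b a.1 b.1, A.ax3b, A.ax1b]
  sup_le a b c h1 h2 := show A.sup (A.sup a.1 b.1) c.1 = c.1 by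
    rw [← A.ax3b, h2, h1]
  inf a b := ⟨A.wedge a.1 b.1, A.wedge_idem ..⟩
  inf_le_left a b := show A.sup (A.wedge a.1 b.1) a.1 = a.1 by
    rw [A.ax2b, A.wedge_def, A.ax7b, a.2]
  inf_le_right a b := show A.sup (A.wedge a.1 b.1) b.1 = b.1 by
    rw [A.ax2b, A.wedge_comm, A.wedge_def, A.ax7b, b.2]
  le_inf a b c h1 h2 := show A.sup a.1 (A.wedge b.1 c.1) = A.wedge b.1 c.1 by
    rw [A.wedge_def, A.ax6b, ← A.wedge_def, ← A.wedge_def, h1, h2]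

lemma dsup_sup_val (a b : A.Dsup) : (a ⊔ b).1 = A.sup a.1 b.1 := rfl

lemma dsup_inf_val (a b : A.Dsup) : (a ⊓ b).1 = A.wedge a.1 b.1 := rfl

instance : DistribLattice A.Dsup where
  le_sup_inf x y z := by
    have h : ((x ⊔ y) ⊓ (x ⊔ z) : A.Dsup) = x ⊔ y ⊓ z := by
      refine Subtype.ext ?_
      show A.wedge (A.sup x.1 y.1) (A.sup x.1 z.1) = A.sup x.1 (A.wedge y.1 z.1)
      rw [A.wedge_def, A.wedge_def, ← A.ax6b]
    exact le_of_eq h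

instance : OrderBot A.Dsup where
  bot := ⟨A.sup A.bot A.bot, A.sup_sup_self ..⟩
  bot_le a := show A.sup (A.sup A.bot A.bot) a.1 = a.1 by
    rw [A.ax1b, A.ax2b, A.sup_bot, a.2]

lemma dsup_bot_val : (⊥ : A.Dsup).1 = A.sup A.bot A.bot := rfl

def dcompl (a : A.Dsup) : A.Dsup := ⟨A.dneg a.1, A.dneg_idem _⟩

lemma inf_dcompl (a : A.Dsup) : a ⊓ A.dcompl a = ⊥ := by
  refine Subtype.ext ?_
  show A.wedge a.1 (A.dneg a.1) = A.sup A.bot A.bot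
  rw [A.wedge_def, A.dneg_dneg, a.2, A.ax2b (A.dneg a.1) a.1, A.ax9b, A.ax10b]

lemma key_ba {t b₁ b₂ c : A.Dsup} (h1 : t ≤ b₁ ⊔ c) (h2 : t ≤ b₂ ⊔ A.dcompl c) :
    t ≤ b₁ ⊔ b₂ := by
  refine (le_inf h1 h2).trans ?_
  rw [inf_sup_right]
  refine sup_le (le_sup_of_le_left _root_.inf_le_left) ?_
  rw [inf_sup_left]
  refine sup_le (le_sup_of_le_right _root_.inf_le_right) ?_
  rw [A.inf_dcompl]
  exact _root_.bot_le

lemma le_of_dsup_le {a b : A.Dsup} (h : a ≤ b) : A.le a.1 b.1 := by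
  rw [dsup_le_def] at h
  constructor
  · conv_lhs => rw [← h]
    exact A.ax5a ..
  · rw [h, b.2]

end DBA

namespace DBA

variable {D : Type u} (A : DBA D)

lemma sup_word1 (i1 i2 x : D) :
    A.sup (A.sup i1 x) (A.sup i2 x) = A.sup (A.sup i1 i2) x := by
  calc A.sup (A.sup i1 x) (A.sup i2 x) = A.sup i1 (A.sup x (A.sup i2 x)) := (A.ax3b ..).symm
    _ = A.sup i1 (A.sup x (A.sup x i2)) := by rw [A.ax2b i2 x]
    _ = A.sup i1 (A.sup (A.sup x x) i2) := by rw [A.ax3b x x i2]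
    _ = A.sup i1 (A.sup x i2) := by rw [A.ax1b x i2]
    _ = A.sup i1 (A.sup i2 x) := by rw [A.ax2b x i2]
    _ = A.sup (A.sup i1 i2) x := A.ax3b ..

def mkPsi (x : D) : A.Dsup := ⟨A.sup x x, A.sup_sup_self x x⟩

lemma psi_le_of_le {x y : D} (h : A.le x y) : A.mkPsi x ≤ A.mkPsi y := by
  show A.sup (A.sup x x) (A.sup y y) = A.sup y y
  rw [A.ax1b, A.sup_idem_r, h.2]

lemma mkPsi_sup (i x : D) : A.mkPsi (A.sup i x) = A.mkPsi i ⊔ A.mkPsi x := by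
  refine Subtype.ext ?_
  show A.sup (A.sup i x) (A.sup i x) = A.sup (A.sup i i) (A.sup x x)
  rw [A.sup_sup_self, A.ax1b, A.sup_idem_r]

lemma dcompl_mkPsi (x : D) : A.dcompl (A.mkPsi x) = A.mkPsi (A.dneg x) := by
  refine Subtype.ext ?_
  show A.dneg (A.sup x x) = A.sup (A.dneg x) (A.dneg x)
  rw [A.ax4b, A.dneg_idem]

/-- Zorn: any ideal disjoint from a primary filter extends to a primary ideal
disjoint from it, provided the ideal contains all `z` with `z ⊔ z = ⊥ ⊔ ⊥`. -/
lemma exists_primary_ideal {F I₀ : Set D} (hF : A.IsPrimaryFilter F) (hI : A.IsIdeal I₀)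
    (hd : F ∩ I₀ = ∅) (hndg : ∀ z, A.sup z z = A.sup A.bot A.bot → z ∈ I₀) :
    ∃ I, A.IsPrimaryIdeal I ∧ I₀ ⊆ I ∧ F ∩ I = ∅ := by
  set S : Set (Set D) := {J | A.IsIdeal J ∧ I₀ ⊆ J ∧ F ∩ J = ∅} with hS
  have hchain : ∀ c ⊆ S, IsChain (· ⊆ ·) c → c.Nonempty → ∃ ub ∈ S, ∀ s ∈ c, s ⊆ ub := by
    rintro c hcS hch ⟨J0, hJ0⟩
    refine ⟨⋃₀ c, ⟨⟨?_, ?_⟩, ?_, ?_⟩, fun s hs => Set.subset_sUnion_of_mem hs⟩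
    · rintro x ⟨J1, hJ1, hx⟩ y ⟨J2, hJ2, hy⟩
      rcases hch.total hJ1 hJ2 with h | h
      · exact ⟨J2, hJ2, (hcS hJ2).1.1 x (h hx) y hy⟩
      · exact ⟨J1, hJ1, (hcS hJ1).1.1 x hx y (h hy)⟩
    · rintro x ⟨J1, hJ1, hx⟩ z hz
      exact ⟨J1, hJ1, (hcS hJ1).1.2 x hx z hz⟩
    · exact fun x hx => ⟨J0, hJ0, (hcS hJ0).2.1 hx⟩
    · rw [Set.eq_empty_iff_forall_notMem]
      rintro x ⟨hxF, J1, hJ1, hxJ⟩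
      exact inter_empty_not_mem (hcS hJ1).2.2 hxF hxJ
  obtain ⟨M, hM0, hMmax⟩ := zorn_subset_nonempty S hchain I₀ ⟨hI, subset_rfl, hd⟩
  have hMS : M ∈ S := hMmax.1
  obtain ⟨hMideal, hMI0, hMd⟩ := hMS
  have hbotM : A.bot ∈ M := hMI0 (hndg A.bot rfl)
  refine ⟨M, ⟨hMideal, ?_, ?_⟩, hM0, hMd⟩
  · intro h
    exact inter_empty_not_mem hMd (A.filter_top_mem hF) (h ▸ Set.mem_univ A.top)
  · intro x
    by_contra hcon
    push_neg at hcon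
    obtain ⟨hx, hdx⟩ := hcon
    have gen : ∀ w, w ∉ M → ∃ f ∈ F, ∃ i ∈ M, A.le f (A.sup i w) := by
      intro w hw
      set J : Set D := {z | ∃ i ∈ M, A.le z (A.sup i w)} with hJ
      have hJideal : A.IsIdeal J := by
        constructor
        · rintro z1 ⟨i1, hi1, h1⟩ z2 ⟨i2, hi2, h2⟩
          refine ⟨A.sup i1 i2, hMideal.1 i1 hi1 i2 hi2, ?_⟩
          have m1 := A.sup_mono_left h1.2 z2
          have m2 := A.sup_mono_right h2.2 (A.sup i1 w)
          have m3 := A.le_trans m1 m2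
          rwa [A.sup_word1] at m3
        · rintro z1 ⟨i1, hi1, h1⟩ z hz
          exact ⟨i1, hi1, A.le_trans hz h1⟩
      have hwJ : w ∈ J := ⟨A.bot, hbotM, A.le_sup_right A.bot w⟩
      by_cases hJF : F ∩ J = ∅
      · exfalso
        have hMJ : M ⊆ J := fun i hi => ⟨i, hi, A.le_sup_left i w⟩
        have hJS : J ∈ S := ⟨hJideal, fun z hz => hMJ (hMI0 hz), hJF⟩
        exact hw (hMmax.2 hJS hMJ hwJ)
      · obtain ⟨f, hfF, hfJ⟩ := Set.nonempty_iff_ne_empty.mpr hJF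
        obtain ⟨i, hi, hle⟩ := hfJ
        exact ⟨f, hfF, i, hi, hle⟩
    obtain ⟨f₁, hf₁F, i₁, hi₁, hle₁⟩ := gen x hx
    obtain ⟨f₂, hf₂F, i₂, hi₂, hle₂⟩ := gen (A.dneg x) hdx
    have hfF : A.inf f₁ f₂ ∈ F := hF.1.1 f₁ hf₁F f₂ hf₂F
    have h1 : A.mkPsi (A.inf f₁ f₂) ≤ A.mkPsi i₁ ⊔ A.mkPsi x := by
      rw [← A.mkPsi_sup]
      exact A.psi_le_of_le (A.le_trans (A.inf_le_left f₁ f₂) hle₁)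
    have h2 : A.mkPsi (A.inf f₁ f₂) ≤ A.mkPsi i₂ ⊔ A.dcompl (A.mkPsi x) := by
      rw [A.dcompl_mkPsi, ← A.mkPsi_sup]
      exact A.psi_le_of_le (A.le_trans (A.inf_le_right f₁ f₂) hle₂)
    have h3 := A.key_ba h1 h2
    rw [← A.mkPsi_sup] at h3
    have h4 : A.le (A.sup (A.inf f₁ f₂) (A.inf f₁ f₂))
        (A.sup (A.sup i₁ i₂) (A.sup i₁ i₂)) := A.le_of_dsup_le h3
    have h5 : A.le (A.inf f₁ f₂) (A.sup (A.sup i₁ i₂) (A.sup i₁ i₂)) :=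
      A.le_trans (A.le_psi _) h4
    have hi12 : A.sup (A.sup i₁ i₂) (A.sup i₁ i₂) ∈ M := by
      have := hMideal.1 i₁ hi₁ i₂ hi₂
      exact hMideal.1 _ this _ this
    exact inter_empty_not_mem hMd hfF (hMideal.2 _ hi12 _ h5)

end DBA

namespace DBA

variable {D : Type u} (A : DBA D)

lemma le_phi_of_sup_eq {z b : D} (h : A.sup z b = b) : A.le (A.inf z z) (A.inf b b) := by
  have hzb : A.inf z b = A.inf z z := by
    conv_lhs => rw [← h]
    exact A.ax5a ..
  have key : A.inf (A.inf z z) (A.inf b b) = A.inf z z := by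
    calc A.inf (A.inf z z) (A.inf b b) = A.inf (A.inf (A.inf z z) b) b := A.ax3a ..
      _ = A.inf (A.inf z b) b := by rw [A.ax1a]
      _ = A.inf (A.inf z z) b := by rw [hzb]
      _ = A.inf z b := A.ax1a ..
      _ = A.inf z z := hzb
  exact A.le_of_inf_idem (A.inf_inf_self z z) key

lemma downIdeal_isIdeal (b : D) : A.IsIdeal {z | A.sup z b = b} := by
  constructor
  · intro z1 h1 z2 h2
    show A.sup (A.sup z1 z2) b = b
    rw [← A.ax3b, h2, h1]
  · intro z hz z' hz'
    show A.sup z' b = b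
    calc A.sup z' b = A.sup z' (A.sup z b) := by rw [hz]
      _ = A.sup (A.sup z' z) b := A.ax3b ..
      _ = A.sup (A.sup z z) b := by rw [hz'.2]
      _ = A.sup z b := by rw [A.ax1b]
      _ = b := hz

lemma mem_downIdeal_of_psi_bot {b : D} (hb : A.sup b b = b) {z : D}
    (hz : A.sup z z = A.sup A.bot A.bot) : A.sup z b = b := by
  calc A.sup z b = A.sup (A.sup z z) b := by rw [A.ax1b]
    _ = A.sup (A.sup A.bot A.bot) b := by rw [hz]
    _ = A.sup A.bot b := by rw [A.ax1b]
    _ = A.sup b A.bot := A.ax2b ..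
    _ = A.sup b b := A.sup_bot b
    _ = b := hb

lemma core1 {F : Set D} (hF : A.IsPrimaryFilter F) (y : D) :
    (∃ I, A.IsPrimaryIdeal I ∧ y ∉ I ∧ F ∩ I = ∅) ↔ A.inf (A.dneg y) (A.dneg y) ∉ F := by
  constructor
  · rintro ⟨I, hI, hyI, hd⟩ hc
    have hdy : A.dneg y ∈ I := (A.ideal_dneg_mem_iff hI y).mpr hyI
    have hm : A.inf (A.dneg y) (A.dneg y) ∈ I := hI.1.2 _ hdy _ (A.phi_le _)
    exact inter_empty_not_mem hd hc hm
  · intro hc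
    have hb : A.sup (A.dneg y) (A.dneg y) = A.dneg y := A.dneg_idem y
    have hd : F ∩ {z | A.sup z (A.dneg y) = A.dneg y} = ∅ := by
      rw [Set.eq_empty_iff_forall_notMem]
      rintro z ⟨hzF, hzI⟩
      have h1 := A.le_phi_of_sup_eq hzI
      have h2 : A.inf z z ∈ F := hF.1.1 z hzF z hzF
      exact hc (hF.1.2 _ h2 _ h1)
    obtain ⟨I, hI, hI₀I, hdI⟩ := A.exists_primary_ideal hF (A.downIdeal_isIdeal (A.dneg y))
      hd (fun z hz => A.mem_downIdeal_of_psi_bot hb hz)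
    refine ⟨I, hI, ?_, hdI⟩
    intro hyI
    have ht : A.top ∈ I := by
      rw [← A.ax9b y]
      exact hI.1.1 y hyI _ (hI₀I hb)
    exact A.ideal_top_not_mem hI ht

lemma core2 {F : Set D} (hF : A.IsPrimaryFilter F) (y : D) :
    (∀ I, A.IsPrimaryIdeal I → F ∩ I = ∅ → y ∉ I) ↔
      A.inf (A.sup y y) (A.sup y y) ∈ F := by
  constructor
  · intro h
    by_contra hc
    have hb : A.sup (A.sup y y) (A.sup y y) = A.sup y y := A.sup_sup_self y y
    have hd : F ∩ {z | A.sup z (A.sup y y) = A.sup y y} = ∅ := by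
      rw [Set.eq_empty_iff_forall_notMem]
      rintro z ⟨hzF, hzI⟩
      have h1 := A.le_phi_of_sup_eq hzI
      have h2 : A.inf z z ∈ F := hF.1.1 z hzF z hzF
      exact hc (hF.1.2 _ h2 _ h1)
    obtain ⟨I, hI, hI₀I, hdI⟩ := A.exists_primary_ideal hF (A.downIdeal_isIdeal (A.sup y y))
      hd (fun z hz => A.mem_downIdeal_of_psi_bot hb hz)
    have hy : y ∈ I := hI₀I (by
      show A.sup y (A.sup y y) = A.sup y y
      rw [A.ax3b, A.ax1b])
    exact h I hI hdI hy
  · intro hc I hI hd hyI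
    have hψ : A.sup y y ∈ I := hI.1.1 y hyI y hyI
    have hm : A.inf (A.sup y y) (A.sup y y) ∈ I := hI.1.2 _ hψ _ (A.phi_le _)
    exact inter_empty_not_mem hd hc hm

lemma wedge_le_psi_left (x y : D) : A.le (A.wedge x y) (A.sup x x) := by
  have e : A.sup (A.wedge x y) x = A.sup x x := by
    rw [A.ax2b, A.wedge_def, A.ax7b]
  constructor
  · conv_lhs => rw [← e]
    exact A.ax5a ..
  · calc A.sup (A.wedge x y) (A.sup x x) = A.sup (A.sup (A.wedge x y) x) x := A.ax3b ..
      _ = A.sup (A.sup x x) x := by rw [e]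
      _ = A.sup x x := A.ax1b ..
      _ = A.sup (A.sup x x) (A.sup x x) := (A.sup_sup_self ..).symm

lemma ideal_wedge_mem_iff {I : Set D} (hI : A.IsPrimaryIdeal I) (x y : D) :
    A.wedge x y ∈ I ↔ x ∈ I ∨ y ∈ I := by
  constructor
  · intro h
    by_contra hcon
    push_neg at hcon
    have h1 : A.dneg x ∈ I := (A.ideal_dneg_mem_iff hI x).mpr hcon.1
    have h2 : A.dneg y ∈ I := (A.ideal_dneg_mem_iff hI y).mpr hcon.2
    have hu : A.sup (A.dneg x) (A.dneg y) ∈ I := hI.1.1 _ h1 _ h2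
    have ht : A.top ∈ I := by
      have hm := hI.1.1 _ hu _ h
      rwa [A.wedge_def, A.ax9b] at hm
    exact A.ideal_top_not_mem hI ht
  · rintro (h | h)
    · have hψ : A.sup x x ∈ I := hI.1.1 x h x h
      exact hI.1.2 _ hψ _ (A.wedge_le_psi_left x y)
    · have hψ : A.sup y y ∈ I := hI.1.1 y h y h
      have hm := hI.1.2 _ hψ _ (A.wedge_le_psi_left y x)
      rwa [A.wedge_comm] at hm

/-! ### Dual (filter-side) versions via the dual algebra -/

lemma core1d {I : Set D} (hI : A.IsPrimaryIdeal I) (y : D) :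
    (∃ F, A.IsPrimaryFilter F ∧ y ∉ F ∧ F ∩ I = ∅) ↔ A.sup (A.neg y) (A.neg y) ∉ I := by
  have h := core1 (A := A.op) (A.op_isPrimaryFilter.mpr hI) y
  refine Iff.trans ?_ h
  constructor
  · rintro ⟨F, hF, h1, h2⟩
    exact ⟨F, A.op_isPrimaryIdeal.mpr hF, h1, by rw [Set.inter_comm]; exact h2⟩
  · rintro ⟨F, hF, h1, h2⟩
    exact ⟨F, A.op_isPrimaryIdeal.mp hF, h1, by rw [Set.inter_comm]; exact h2⟩

lemma core2d {I : Set D} (hI : A.IsPrimaryIdeal I) (y : D) :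
    (∀ F, A.IsPrimaryFilter F → F ∩ I = ∅ → y ∉ F) ↔
      A.sup (A.inf y y) (A.inf y y) ∈ I := by
  have h := core2 (A := A.op) (A.op_isPrimaryFilter.mpr hI) y
  refine Iff.trans ?_ h
  constructor
  · intro hh J hJ hd
    exact hh J (A.op_isPrimaryIdeal.mp hJ) (by rw [Set.inter_comm]; exact hd)
  · intro hh F hF hd
    exact hh F (A.op_isPrimaryIdeal.mpr hF) (by rw [Set.inter_comm]; exact hd)

lemma filter_vee_mem_iff {F : Set D} (hF : A.IsPrimaryFilter F) (x y : D) :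
    A.vee x y ∈ F ↔ x ∈ F ∨ y ∈ F :=
  ideal_wedge_mem_iff (A := A.op) (A.op_isPrimaryIdeal.mpr hF) x y

lemma exists_primary_filter {I F₀ : Set D} (hI : A.IsPrimaryIdeal I) (hF : A.IsFilter F₀)
    (hd : I ∩ F₀ = ∅) (hndg : ∀ z, A.inf z z = A.inf A.top A.top → z ∈ F₀) :
    ∃ F, A.IsPrimaryFilter F ∧ F₀ ⊆ F ∧ I ∩ F = ∅ := by
  obtain ⟨F, hF', h1, h2⟩ := exists_primary_ideal (A := A.op)
    (A.op_isPrimaryFilter.mpr hI) (A.op_isIdeal.mpr hF) hd hndg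
  exact ⟨F, A.op_isPrimaryIdeal.mp hF', h1, h2⟩

end DBA

lemma odia_biUnion {G : Type u} {M : Type v} {ι : Type*} (R : G → M → Prop)
    (s : Set ι) (f : ι → Set M) :
    odia R (⋃ i ∈ s, f i) = ⋃ i ∈ s, odia R (f i) := by
  ext g
  constructor
  · rintro ⟨m, hm, hR⟩
    rw [Set.mem_iUnion₂] at hm
    obtain ⟨i, hi, hmi⟩ := hm
    exact Set.mem_iUnion₂.mpr ⟨i, hi, m, hmi, hR⟩
  · intro h
    rw [Set.mem_iUnion₂] at h
    obtain ⟨i, hi, m, hmi, hR⟩ := h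
    exact ⟨m, Set.mem_iUnion₂.mpr ⟨i, hi, hmi⟩, hR⟩

lemma obdia_biUnion {G : Type u} {M : Type v} {ι : Type*} (R : G → M → Prop)
    (s : Set ι) (f : ι → Set G) :
    obdia R (⋃ i ∈ s, f i) = ⋃ i ∈ s, obdia R (f i) := by
  ext m
  constructor
  · rintro ⟨g, hg, hR⟩
    rw [Set.mem_iUnion₂] at hg
    obtain ⟨i, hi, hgi⟩ := hg
    exact Set.mem_iUnion₂.mpr ⟨i, hi, g, hgi, hR⟩
  · intro h
    rw [Set.mem_iUnion₂] at h
    obtain ⟨i, hi, g, hgi, hR⟩ := h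
    exact ⟨g, Set.mem_iUnion₂.mpr ⟨i, hi, hgi⟩, hR⟩

namespace DBA

/-- closure of a set under `⊔`, together with `⊥` -/
inductive SupCl {D : Type u} (A : DBA D) (S : Set D) : D → Prop
  | base : SupCl A S A.bot
  | mem : ∀ {y}, y ∈ S → SupCl A S y
  | sup : ∀ {a b}, SupCl A S a → SupCl A S b → SupCl A S (A.sup a b)

variable {D : Type u} (A : DBA D)

lemma supCl_mem {I : Set D} (hI : A.IsPrimaryIdeal I) {S : Set D} {t : D}
    (h : SupCl A S t) (hall : ∀ y ∈ S, y ∈ I) : t ∈ I := by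
  induction h with
  | base => exact A.ideal_bot_mem hI
  | mem hy => exact hall _ hy
  | sup ha hb iha ihb => exact hI.1.1 _ iha _ ihb

lemma supCl_witness {I : Set D} (hI : A.IsPrimaryIdeal I) {S : Set D} {t : D}
    (h : SupCl A S t) (ht : t ∉ I) : ∃ y ∈ S, y ∉ I := by
  by_contra hcon
  push_neg at hcon
  exact ht (A.supCl_mem hI h hcon)

lemma sup_word2 (a b c d : D) :
    A.sup (A.sup a b) (A.sup c d) = A.sup (A.sup a c) (A.sup b d) := by
  calc A.sup (A.sup a b) (A.sup c d) = A.sup a (A.sup b (A.sup c d)) := (A.ax3b ..).symm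
    _ = A.sup a (A.sup (A.sup b c) d) := by rw [A.ax3b b c d]
    _ = A.sup a (A.sup (A.sup c b) d) := by rw [A.ax2b b c]
    _ = A.sup a (A.sup c (A.sup b d)) := by rw [A.ax3b c b d]
    _ = A.sup (A.sup a c) (A.sup b d) := A.ax3b ..

/-! ### Topology-level lemmas : ideal side -/

lemma isOpen_Iset_compl (x : D) : @IsOpen (PrimI A) (idlTop A) (Iset A x)ᶜ :=
  TopologicalSpace.GenerateOpen.basic _ ⟨x, rfl⟩

lemma isOpen_Fset_compl (x : D) : @IsOpen (PrimF A) (filtTop A) (Fset A x)ᶜ :=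
  TopologicalSpace.GenerateOpen.basic _ ⟨x, rfl⟩

lemma Fset_eq_compl (x : D) : Fset A x = (Fset A (A.neg x))ᶜ := by
  ext F
  show x ∈ F.val ↔ ¬(A.neg x ∈ F.val)
  rw [A.filter_neg_mem_iff F.2]
  exact not_not.symm

lemma Iset_eq_compl (x : D) : Iset A x = (Iset A (A.dneg x))ᶜ := by
  ext I
  show x ∈ I.val ↔ ¬(A.dneg x ∈ I.val)
  rw [A.ideal_dneg_mem_iff I.2]
  exact not_not.symm

lemma isOpen_Fset (x : D) : @IsOpen (PrimF A) (filtTop A) (Fset A x) := by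
  rw [A.Fset_eq_compl]
  exact A.isOpen_Fset_compl _

lemma isOpen_Iset (x : D) : @IsOpen (PrimI A) (idlTop A) (Iset A x) := by
  rw [A.Iset_eq_compl]
  exact A.isOpen_Iset_compl _

lemma idl_open_structure {O : Set (PrimI A)} (hO : @IsOpen _ (idlTop A) O) :
    ∃ S : Set D, O = ⋃ y ∈ S, (Iset A y)ᶜ := by
  have hO' : TopologicalSpace.GenerateOpen {U | ∃ x, U = (Iset A x)ᶜ} O := hO
  clear hO
  induction hO' with
  | basic U hU =>
    obtain ⟨y, rfl⟩ := hU
    exact ⟨{y}, by simp⟩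
  | univ =>
    refine ⟨{A.top}, ?_⟩
    ext I
    simp only [Set.mem_univ, Set.mem_singleton_iff, Set.iUnion_iUnion_eq_left, true_iff]
    exact A.ideal_top_not_mem I.2
  | inter U V hU hV ihU ihV =>
    obtain ⟨S1, rfl⟩ := ihU
    obtain ⟨S2, rfl⟩ := ihV
    refine ⟨Set.image2 A.wedge S1 S2, ?_⟩
    ext I
    constructor
    · rintro ⟨h1, h2⟩
      rw [Set.mem_iUnion₂] at h1 h2
      obtain ⟨y1, hy1, hI1⟩ := h1
      obtain ⟨y2, hy2, hI2⟩ := h2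
      refine Set.mem_iUnion₂.mpr ⟨A.wedge y1 y2, Set.mem_image2_of_mem hy1 hy2, ?_⟩
      intro hw
      rcases (A.ideal_wedge_mem_iff I.2 y1 y2).mp hw with h | h
      · exact hI1 h
      · exact hI2 h
    · intro h
      rw [Set.mem_iUnion₂] at h
      obtain ⟨w, hw, hIw⟩ := h
      obtain ⟨y1, hy1, y2, hy2, rfl⟩ := Set.mem_image2.mp hw
      constructor
      · refine Set.mem_iUnion₂.mpr ⟨y1, hy1, ?_⟩
        intro h1
        exact hIw ((A.ideal_wedge_mem_iff I.2 y1 y2).mpr (Or.inl h1))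
      · refine Set.mem_iUnion₂.mpr ⟨y2, hy2, ?_⟩
        intro h2
        exact hIw ((A.ideal_wedge_mem_iff I.2 y1 y2).mpr (Or.inr h2))
  | sUnion Us hUs ih =>
    choose! f hf using ih
    refine ⟨⋃ U ∈ Us, f U, ?_⟩
    ext I
    constructor
    · rintro ⟨U, hU, hIU⟩
      rw [hf U hU, Set.mem_iUnion₂] at hIU
      obtain ⟨y, hy, hIy⟩ := hIU
      exact Set.mem_iUnion₂.mpr ⟨y, Set.mem_iUnion₂.mpr ⟨U, hU, hy⟩, hIy⟩
    · intro h
      rw [Set.mem_iUnion₂] at h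
      obtain ⟨y, hyS, hIy⟩ := h
      rw [Set.mem_iUnion₂] at hyS
      obtain ⟨U, hU, hyU⟩ := hyS
      exact ⟨U, hU, (hf U hU) ▸ Set.mem_iUnion₂.mpr ⟨y, hyU, hIy⟩⟩

lemma odia_basic (y : D) :
    odia (nabla A) ((Iset A y)ᶜ) = (Fset A (A.inf (A.dneg y) (A.dneg y)))ᶜ := by
  ext F
  show (∃ I ∈ (Iset A y)ᶜ, nabla A F I) ↔ A.inf (A.dneg y) (A.dneg y) ∉ F.val
  rw [← A.core1 F.2 y]
  constructor
  · rintro ⟨I, hIy, hd⟩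
    exact ⟨I.val, I.2, hIy, hd⟩
  · rintro ⟨I, hI, hIy, hd⟩
    exact ⟨⟨I, hI⟩, hIy, hd⟩

lemma obox_basic (t : D) :
    obox (nabla A) ((Iset A t)ᶜ) = Fset A (A.inf (A.sup t t) (A.sup t t)) := by
  ext F
  show (∀ I, nabla A F I → I ∈ (Iset A t)ᶜ) ↔ A.inf (A.sup t t) (A.sup t t) ∈ F.val
  rw [← A.core2 F.2 t]
  constructor
  · intro h I hI hd
    exact h ⟨I, hI⟩ hd
  · intro h I hd
    exact h I.val I.2 hd

lemma obox_union_eq (S : Set D) :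
    obox (nabla A) (⋃ y ∈ S, (Iset A y)ᶜ) =
      ⋃ t ∈ {t | SupCl A S t}, obox (nabla A) ((Iset A t)ᶜ) := by
  apply Set.Subset.antisymm
  · intro F hF
    set I₀ : Set D := {z | ∃ t, SupCl A S t ∧ A.sup z t = A.sup t t} with hI₀def
    have hI₀ : A.IsIdeal I₀ := by
      constructor
      · rintro z1 ⟨t1, ht1, h1⟩ z2 ⟨t2, ht2, h2⟩
        refine ⟨A.sup t1 t2, SupCl.sup ht1 ht2, ?_⟩
        show A.sup (A.sup z1 z2) (A.sup t1 t2) = A.sup (A.sup t1 t2) (A.sup t1 t2)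
        rw [A.sup_word2 z1 z2 t1 t2, h1, h2, A.sup_word2 t1 t2 t1 t2]
      · rintro z ⟨t, ht, hzt⟩ z' hz'
        refine ⟨t, ht, ?_⟩
        show A.sup z' t = A.sup t t
        calc A.sup z' t = A.sup z' (A.sup t t) := (A.sup_idem_r ..).symm
          _ = A.sup z' (A.sup z t) := by rw [hzt]
          _ = A.sup (A.sup z' z) t := A.ax3b ..
          _ = A.sup (A.sup z z) t := by rw [hz'.2]
          _ = A.sup z t := by rw [A.ax1b]
          _ = A.sup t t := hzt
    by_cases hdis : F.val ∩ I₀ = ∅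
    · exfalso
      have hndg : ∀ z, A.sup z z = A.sup A.bot A.bot → z ∈ I₀ := fun z hz =>
        ⟨A.bot, SupCl.base, by rw [A.sup_bot]; exact hz⟩
      obtain ⟨I, hI, hI₀I, hdI⟩ := A.exists_primary_ideal F.2 hI₀ hdis hndg
      have hIO := hF ⟨I, hI⟩ hdI
      replace hIO := Set.mem_iUnion₂.mp hIO
      obtain ⟨y, hyS, hIy⟩ := hIO
      exact hIy (hI₀I ⟨y, SupCl.mem hyS, rfl⟩)
    · obtain ⟨x, hxF, t, ht, hxt⟩ := Set.nonempty_iff_ne_empty.mpr hdis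
      refine Set.mem_iUnion₂.mpr ⟨t, ht, ?_⟩
      intro I hd htI
      have hψ : A.sup t t ∈ I.val := I.2.1.1 t htI t htI
      have hle : A.le x (A.sup t t) :=
        A.le_of_sup_idem (A.sup_sup_self t t) (by rw [A.sup_idem_r]; exact hxt)
      exact inter_empty_not_mem hd hxF (I.2.1.2 _ hψ x hle)
  · refine Set.iUnion₂_subset fun t ht => ?_
    intro F hFt I hd
    have htI : t ∉ I.val := hFt I hd
    obtain ⟨y, hyS, hyI⟩ := A.supCl_witness I.2 ht htI
    exact Set.mem_iUnion₂.mpr ⟨y, hyS, hyI⟩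

lemma half1 {O : Set (PrimI A)} (hO : @IsOpen _ (idlTop A) O) :
    @IsOpen _ (filtTop A) (odia (nabla A) O) ∧ @IsOpen _ (filtTop A) (obox (nabla A) O) := by
  obtain ⟨S, rfl⟩ := A.idl_open_structure hO
  letI := filtTop A
  constructor
  · rw [odia_biUnion]
    have he : ∀ y ∈ S, odia (nabla A) ((Iset A y)ᶜ) =
        (Fset A (A.inf (A.dneg y) (A.dneg y)))ᶜ := fun y _ => A.odia_basic y
    rw [Set.iUnion₂_congr he]
    exact isOpen_biUnion fun y _ => A.isOpen_Fset_compl _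
  · rw [A.obox_union_eq]
    have he : ∀ t ∈ {t | SupCl A S t}, obox (nabla A) ((Iset A t)ᶜ) =
        Fset A (A.inf (A.sup t t) (A.sup t t)) := fun t _ => A.obox_basic t
    rw [Set.iUnion₂_congr he]
    exact isOpen_biUnion fun t _ => A.isOpen_Fset _

end DBA

namespace DBA

variable {D : Type u} (A : DBA D)

/-! ### Topology-level lemmas : filter side (mirror images) -/

lemma filt_open_structure {O : Set (PrimF A)} (hO : @IsOpen _ (filtTop A) O) :
    ∃ S : Set D, O = ⋃ y ∈ S, (Fset A y)ᶜ := by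
  have hO' : TopologicalSpace.GenerateOpen {U | ∃ x, U = (Fset A x)ᶜ} O := hO
  clear hO
  induction hO' with
  | basic U hU =>
    obtain ⟨y, rfl⟩ := hU
    exact ⟨{y}, by simp⟩
  | univ =>
    refine ⟨{A.bot}, ?_⟩
    ext F
    simp only [Set.mem_univ, Set.mem_singleton_iff, Set.iUnion_iUnion_eq_left, true_iff]
    exact A.filter_bot_not_mem F.2
  | inter U V hU hV ihU ihV =>
    obtain ⟨S1, rfl⟩ := ihU
    obtain ⟨S2, rfl⟩ := ihV
    refine ⟨Set.image2 A.vee S1 S2, ?_⟩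
    ext F
    constructor
    · rintro ⟨h1, h2⟩
      rw [Set.mem_iUnion₂] at h1 h2
      obtain ⟨y1, hy1, hF1⟩ := h1
      obtain ⟨y2, hy2, hF2⟩ := h2
      refine Set.mem_iUnion₂.mpr ⟨A.vee y1 y2, Set.mem_image2_of_mem hy1 hy2, ?_⟩
      intro hw
      rcases (A.filter_vee_mem_iff F.2 y1 y2).mp hw with h | h
      · exact hF1 h
      · exact hF2 h
    · intro h
      rw [Set.mem_iUnion₂] at h
      obtain ⟨w, hw, hFw⟩ := h
      obtain ⟨y1, hy1, y2, hy2, rfl⟩ := Set.mem_image2.mp hw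
      constructor
      · refine Set.mem_iUnion₂.mpr ⟨y1, hy1, ?_⟩
        intro h1
        exact hFw ((A.filter_vee_mem_iff F.2 y1 y2).mpr (Or.inl h1))
      · refine Set.mem_iUnion₂.mpr ⟨y2, hy2, ?_⟩
        intro h2
        exact hFw ((A.filter_vee_mem_iff F.2 y1 y2).mpr (Or.inr h2))
  | sUnion Us hUs ih =>
    choose! f hf using ih
    refine ⟨⋃ U ∈ Us, f U, ?_⟩
    ext F
    constructor
    · rintro ⟨U, hU, hFU⟩
      rw [hf U hU, Set.mem_iUnion₂] at hFU
      obtain ⟨y, hy, hFy⟩ := hFU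
      exact Set.mem_iUnion₂.mpr ⟨y, Set.mem_iUnion₂.mpr ⟨U, hU, hy⟩, hFy⟩
    · intro h
      rw [Set.mem_iUnion₂] at h
      obtain ⟨y, hyS, hFy⟩ := h
      rw [Set.mem_iUnion₂] at hyS
      obtain ⟨U, hU, hyU⟩ := hyS
      exact ⟨U, hU, (hf U hU) ▸ Set.mem_iUnion₂.mpr ⟨y, hyU, hFy⟩⟩

lemma obdia_basic (y : D) :
    obdia (nabla A) ((Fset A y)ᶜ) = (Iset A (A.sup (A.neg y) (A.neg y)))ᶜ := by
  ext I
  show (∃ F ∈ (Fset A y)ᶜ, nabla A F I) ↔ A.sup (A.neg y) (A.neg y) ∉ I.val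
  rw [← A.core1d I.2 y]
  constructor
  · rintro ⟨F, hFy, hd⟩
    exact ⟨F.val, F.2, hFy, hd⟩
  · rintro ⟨F, hF, hFy, hd⟩
    exact ⟨⟨F, hF⟩, hFy, hd⟩

lemma obbox_basic (t : D) :
    obbox (nabla A) ((Fset A t)ᶜ) = Iset A (A.sup (A.inf t t) (A.inf t t)) := by
  ext I
  show (∀ F, nabla A F I → F ∈ (Fset A t)ᶜ) ↔ A.sup (A.inf t t) (A.inf t t) ∈ I.val
  rw [← A.core2d I.2 t]
  constructor
  · intro h F hF hd
    exact h ⟨F, hF⟩ hd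
  · intro h F hd
    exact h F.val F.2 hd

lemma obbox_union_eq (S : Set D) :
    obbox (nabla A) (⋃ y ∈ S, (Fset A y)ᶜ) =
      ⋃ t ∈ {t | SupCl A.op S t}, obbox (nabla A) ((Fset A t)ᶜ) := by
  apply Set.Subset.antisymm
  · intro I hI
    set F₀ : Set D := {z | ∃ t, SupCl A.op S t ∧ A.inf z t = A.inf t t} with hF₀def
    have hF₀ : A.IsFilter F₀ := by
      refine A.op_isIdeal.mp ?_
      constructor
      · rintro z1 ⟨t1, ht1, h1⟩ z2 ⟨t2, ht2, h2⟩
        refine ⟨A.inf t1 t2, SupCl.sup ht1 ht2, ?_⟩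
        show A.inf (A.inf z1 z2) (A.inf t1 t2) = A.inf (A.inf t1 t2) (A.inf t1 t2)
        calc A.inf (A.inf z1 z2) (A.inf t1 t2)
            = A.inf (A.inf z1 t1) (A.inf z2 t2) := sup_word2 (A := A.op) z1 z2 t1 t2
          _ = A.inf (A.inf t1 t1) (A.inf t2 t2) := by rw [h1, h2]
          _ = A.inf (A.inf t1 t2) (A.inf t1 t2) := (sup_word2 (A := A.op) t1 t2 t1 t2).symm
      · rintro z ⟨t, ht, hzt⟩ z' hz'
        refine ⟨t, ht, ?_⟩
        show A.inf z' t = A.inf t t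
        have hz'2 : A.inf z' z = A.inf z z := by
          rw [A.ax2a z' z]
          exact (A.op_le.mp hz').1
        calc A.inf z' t = A.inf z' (A.inf t t) := (A.inf_idem_r ..).symm
          _ = A.inf z' (A.inf z t) := by rw [hzt]
          _ = A.inf (A.inf z' z) t := A.ax3a ..
          _ = A.inf (A.inf z z) t := by rw [hz'2]
          _ = A.inf z t := by rw [A.ax1a]
          _ = A.inf t t := hzt
    by_cases hdis : I.val ∩ F₀ = ∅
    · exfalso
      have hndg : ∀ z, A.inf z z = A.inf A.top A.top → z ∈ F₀ := fun z hz =>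
        ⟨A.top, SupCl.base, by rw [A.inf_top]; exact hz⟩
      obtain ⟨F, hF, hF₀F, hdF⟩ := A.exists_primary_filter I.2 hF₀ hdis hndg
      have hFO := hI ⟨F, hF⟩ (by rw [Set.inter_comm] at hdF; exact hdF)
      replace hFO := Set.mem_iUnion₂.mp hFO
      obtain ⟨y, hyS, hFy⟩ := hFO
      exact hFy (hF₀F ⟨y, SupCl.mem hyS, rfl⟩)
    · obtain ⟨x, hxI, t, ht, hxt⟩ := Set.nonempty_iff_ne_empty.mpr hdis
      refine Set.mem_iUnion₂.mpr ⟨t, ht, ?_⟩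
      intro F hd htF
      have hφ : A.inf t t ∈ F.val := F.2.1.1 t htF t htF
      have hle : A.le (A.inf t t) x := by
        refine A.op_le.mp (le_of_sup_idem (A := A.op) (A.inf_inf_self t t) ?_)
        show A.inf x (A.inf t t) = A.inf t t
        rw [A.inf_idem_r]
        exact hxt
      exact inter_empty_not_mem hd (F.2.1.2 _ hφ x hle) hxI
  · refine Set.iUnion₂_subset fun t ht => ?_
    intro I hIt F hd
    have htF : t ∉ F.val := hIt F hd
    obtain ⟨y, hyS, hyF⟩ := supCl_witness (A := A.op) (A.op_isPrimaryIdeal.mpr F.2) ht htF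
    exact Set.mem_iUnion₂.mpr ⟨y, hyS, hyF⟩

lemma half2 {O : Set (PrimF A)} (hO : @IsOpen _ (filtTop A) O) :
    @IsOpen _ (idlTop A) (obdia (nabla A) O) ∧ @IsOpen _ (idlTop A) (obbox (nabla A) O) := by
  obtain ⟨S, rfl⟩ := A.filt_open_structure hO
  letI := idlTop A
  constructor
  · rw [obdia_biUnion]
    have he : ∀ y ∈ S, obdia (nabla A) ((Fset A y)ᶜ) =
        (Iset A (A.sup (A.neg y) (A.neg y)))ᶜ := fun y _ => A.obdia_basic y
    rw [Set.iUnion₂_congr he]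
    exact isOpen_biUnion fun y _ => A.isOpen_Iset_compl _
  · rw [A.obbox_union_eq]
    have he : ∀ t ∈ {t | SupCl A.op S t}, obbox (nabla A) ((Fset A t)ᶜ) =
        Iset A (A.sup (A.inf t t) (A.inf t t)) := fun t _ => A.obbox_basic t
    rw [Set.iUnion₂_congr he]
    exact isOpen_biUnion fun t _ => A.isOpen_Iset _

end DBA

/-- K^T_pr(D) is a CTSCR: ∇ and ∇⁻¹ are continuous. -/
theorem stmt13 {D : Type u} (A : DBA D) :
    (∀ O : Set (PrimI A), @IsOpen (PrimI A) (idlTop A) O →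
      @IsOpen (PrimF A) (filtTop A) (odia (nabla A) O) ∧
      @IsOpen (PrimF A) (filtTop A) (obox (nabla A) O)) ∧
    (∀ O : Set (PrimF A), @IsOpen (PrimF A) (filtTop A) O →
      @IsOpen (PrimI A) (idlTop A) (obdia (nabla A) O) ∧
      @IsOpen (PrimI A) (idlTop A) (obbox (nabla A) O)) := by
  exact ⟨fun _ hO => A.half1 hO, fun _ hO => A.half2 hO⟩
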